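/- If Γ is residually finite with a decreasing sequence (Δ_n) of finite-index subgroups having trivial intersection, then for k, n ∈ ℕ⁺, the set P(k, n) of all maps x : Γ → {0, 1/k, …, (k−1)/k} that are constant on the right cosets of Δ_n is finite, shift-invariant, and the uniform probability measures on P(k, n) converge weak-* to the product Lebesgue measure λ^Γ as k, n → ∞. -/

import Mathlib

open MeasureTheory Filter Topology ProbabilityTheory Set
open scoped Uniformity ENNReal

namespace CosetConstAux

noncomputable def sk (k : ℕ) (t : unitInterval) : unitInterval :=
  if hk : k = 0 then t else
    ⟨(min ⌊(k : ℝ) * t⌋₊ (k - 1) : ℕ) / k, by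
      have hk0 : (0:ℝ) < k := by exact_mod_cast Nat.pos_of_ne_zero hk
      constructor
      · positivity
      · rw [div_le_one hk0]
        calc ((min ⌊(k : ℝ) * t⌋₊ (k - 1) : ℕ) : ℝ) ≤ ((k - 1 : ℕ) : ℝ) := by
              exact_mod_cast min_le_right _ _
          _ ≤ (k : ℝ) := by exact_mod_cast Nat.sub_le k 1⟩

lemma sk_coe (k : ℕ) (hk : k ≠ 0) (t : unitInterval) :
    (sk k t : ℝ) = (min ⌊(k : ℝ) * t⌋₊ (k - 1) : ℕ) / k := by
  rw [sk, dif_neg hk]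

lemma sk_spec (k : ℕ) (hk : k ≠ 0) (t : unitInterval) :
    ∃ i : ℕ, i < k ∧ (sk k t : ℝ) = i / k := by
  refine ⟨min ⌊(k : ℝ) * t⌋₊ (k - 1), ?_, sk_coe k hk t⟩
  have : k - 1 < k := Nat.sub_lt (Nat.pos_of_ne_zero hk) one_pos
  exact lt_of_le_of_lt (min_le_right _ _) this

lemma sk_eq_iff (k : ℕ) (hk : k ≠ 0) (t q : unitInterval) (i : ℕ) (hq : (q : ℝ) = i / k) :
    sk k t = q ↔ min ⌊(k : ℝ) * t⌋₊ (k - 1) = i := by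
  have hk0 : (0:ℝ) < k := by exact_mod_cast Nat.pos_of_ne_zero hk
  constructor
  · intro h
    have : (sk k t : ℝ) = i / k := by rw [h, hq]
    rw [sk_coe k hk t, div_eq_div_iff hk0.ne' hk0.ne'] at this
    have h2 : ((min ⌊(k : ℝ) * t⌋₊ (k - 1) : ℕ) : ℝ) = i := by
      exact mul_right_cancel₀ hk0.ne' this
    exact_mod_cast h2
  · intro h
    apply Subtype.ext
    rw [sk_coe k hk t, hq, h]

lemma sk_measurable (k : ℕ) : Measurable (sk k) := by
  rcases eq_or_ne k 0 with rfl | hk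
  · rw [show sk 0 = id from funext fun t => dif_pos rfl]; exact measurable_id
  · have h1 : Measurable fun t : unitInterval => (min ⌊(k : ℝ) * t⌋₊ (k - 1) : ℕ) := by
      apply Measurable.min ?_ measurable_const
      exact Measurable.nat_floor (measurable_const.mul continuous_subtype_val.measurable)
    have h2 : sk k = (fun m : ℕ => Set.projIcc (0:ℝ) 1 zero_le_one ((m : ℝ) / k)) ∘
        (fun t : unitInterval => (min ⌊(k : ℝ) * t⌋₊ (k - 1) : ℕ)) := by
      funext t
      simp only [Function.comp_apply]
      have hmem : ((min ⌊(k : ℝ) * t⌋₊ (k - 1) : ℕ) : ℝ) / k ∈ Set.Icc (0:ℝ) 1 := by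
        rw [← sk_coe k hk t]; exact (sk k t).2
      rw [Set.projIcc_of_mem zero_le_one hmem]
      exact Subtype.ext (sk_coe k hk t)
    rw [h2]
    exact (measurable_from_top (f := fun m : ℕ => Set.projIcc (0:ℝ) 1 zero_le_one ((m : ℝ) / k))).comp h1

lemma sk_fixed (k : ℕ) (hk : k ≠ 0) (t : unitInterval) (i : ℕ) (hik : i < k)
    (ht : (t : ℝ) = i / k) : sk k t = t := by
  have hk0 : (0:ℝ) < k := by exact_mod_cast Nat.pos_of_ne_zero hk
  rw [show t = t from rfl, sk_eq_iff k hk t t i ht]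
  have hfl : ⌊(k:ℝ) * t⌋₊ = i := by
    rw [ht, mul_div_cancel₀ _ hk0.ne']
    exact Nat.floor_natCast i
  rw [hfl]
  exact min_eq_left (by omega)

lemma sk_dist (k : ℕ) (hk : k ≠ 0) (t : unitInterval) : dist (sk k t) t ≤ 1 / k := by
  have hk0 : (0:ℝ) < k := by exact_mod_cast Nat.pos_of_ne_zero hk
  have h0 : (0:ℝ) ≤ (k:ℝ) * t := mul_nonneg hk0.le t.2.1
  rw [Subtype.dist_eq, Real.dist_eq, sk_coe k hk t]
  rcases le_or_gt ⌊(k:ℝ)*t⌋₊ (k-1) with h | h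
  · rw [min_eq_left h]
    have h1 : (⌊(k:ℝ)*t⌋₊ : ℝ) ≤ k * t := Nat.floor_le h0
    have h2 : (k:ℝ) * t < ⌊(k:ℝ)*t⌋₊ + 1 := Nat.lt_floor_add_one _
    have e1 : (⌊(k:ℝ)*t⌋₊:ℝ)/k - t = ((⌊(k:ℝ)*t⌋₊:ℝ) - k*t)/k := by field_simp
    rw [e1, abs_div, abs_of_pos hk0, div_le_div_iff_of_pos_right hk0]
    rw [abs_le]; constructor <;> linarith
  · have hfl : k ≤ ⌊(k:ℝ)*t⌋₊ := by omega
    have hkt : (k:ℝ) ≤ k * t := le_trans (by exact_mod_cast hfl) (Nat.floor_le h0)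
    have ht1 : (t:ℝ) = 1 := le_antisymm t.2.2 (by nlinarith)
    rw [min_eq_right h.le, ht1, Nat.cast_sub (Nat.one_le_iff_ne_zero.2 hk), Nat.cast_one]
    have e2 : ((k:ℝ) - 1)/k - 1 = -(1/k) := by field_simp; ring
    rw [e2, abs_neg, abs_of_pos (by positivity)]

lemma sk_preimage_volume (k : ℕ) (hk : k ≠ 0) (q : unitInterval) (i : ℕ) (hik : i < k)
    (hq : (q : ℝ) = i / k) :
    volume (Subtype.val '' (sk k ⁻¹' {q})) = ENNReal.ofReal (1 / k) := by
  have hk0 : (0:ℝ) < k := by exact_mod_cast Nat.pos_of_ne_zero hk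
  have hik' : ((i:ℝ)+1)/k ≤ 1 := by
    rw [div_le_one hk0]; exact_mod_cast hik
  have hsub1 : Set.Ico ((i:ℝ)/k) (((i:ℝ)+1)/k) ⊆ Subtype.val '' (sk k ⁻¹' {q}) := by
    rintro r ⟨hr1, hr2⟩
    have hr0 : 0 ≤ r := le_trans (by positivity) hr1
    have hrle : r ≤ 1 := le_trans hr2.le hik'
    refine ⟨⟨r, hr0, hrle⟩, ?_, rfl⟩
    rw [Set.mem_preimage, Set.mem_singleton_iff, sk_eq_iff k hk _ q i hq]
    have hfl : ⌊(k:ℝ)*r⌋₊ = i := by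
      rw [Nat.floor_eq_iff (mul_nonneg hk0.le hr0)]
      constructor
      · calc (i:ℝ) = ((i:ℝ)/k)*k := by field_simp
          _ ≤ r * k := mul_le_mul_of_nonneg_right hr1 hk0.le
          _ = k * r := mul_comm _ _
      · calc (k:ℝ) * r = r * k := mul_comm _ _
          _ < (((i:ℝ)+1)/k) * k := mul_lt_mul_of_pos_right hr2 hk0
          _ = (i:ℝ) + 1 := by field_simp
    rw [hfl]
    exact min_eq_left (by omega)
  have hsub2 : Subtype.val '' (sk k ⁻¹' {q}) ⊆ Set.Icc ((i:ℝ)/k) (((i:ℝ)+1)/k) := by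
    rintro r ⟨t, ht, rfl⟩
    rw [Set.mem_preimage, Set.mem_singleton_iff, sk_eq_iff k hk _ q i hq] at ht
    have h0 : (0:ℝ) ≤ (k:ℝ) * t := mul_nonneg hk0.le t.2.1
    rcases le_or_gt ⌊(k:ℝ)*t⌋₊ (k-1) with h | h
    · rw [min_eq_left h] at ht
      have h1 : (i:ℝ) ≤ k*t := by rw [← ht]; exact_mod_cast Nat.floor_le h0
      have h2 : (k:ℝ)*t < (i:ℝ)+1 := by
        have := Nat.lt_floor_add_one ((k:ℝ)*t)
        rw [ht] at this; exact_mod_cast this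
      constructor
      · rw [div_le_iff₀ hk0]; linarith [mul_comm (t:ℝ) (k:ℝ)]
      · rw [le_div_iff₀ hk0]; linarith [mul_comm (t:ℝ) (k:ℝ)]
    · rw [min_eq_right h.le] at ht
      have hfl : k ≤ ⌊(k:ℝ)*t⌋₊ := by omega
      have hkt : (k:ℝ) ≤ k * t := le_trans (by exact_mod_cast hfl) (Nat.floor_le h0)
      have ht1 : (t:ℝ) = 1 := le_antisymm t.2.2 (by nlinarith)
      have hi : (i:ℝ) = (k:ℝ) - 1 := by
        rw [← ht, Nat.cast_sub (Nat.one_le_iff_ne_zero.2 hk), Nat.cast_one]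
      constructor
      · rw [ht1, div_le_one hk0, hi]; linarith
      · rw [ht1, le_div_iff₀ hk0, hi]; linarith
  have hIco : volume (Set.Ico ((i:ℝ)/k) (((i:ℝ)+1)/k)) = ENNReal.ofReal (1/k) := by
    rw [Real.volume_Ico]; congr 1; field_simp; ring
  have hIcc : volume (Set.Icc ((i:ℝ)/k) (((i:ℝ)+1)/k)) = ENNReal.ofReal (1/k) := by
    rw [Real.volume_Icc]; congr 1; field_simp; ring
  exact le_antisymm (hIcc ▸ measure_mono hsub2) (hIco ▸ measure_mono hsub1)

lemma meas_coe_finset_eq_sum {α : Type*} [MeasurableSpace α] [MeasurableSingletonClass α]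
    (μ : Measure α) (t : Finset α) : μ ↑t = ∑ x ∈ t, μ {x} := by
  have h : (↑t : Set α) = ⋃ x ∈ t, {x} := (Set.biUnion_of_singleton (↑t : Set α)).symm
  rw [h, measure_biUnion_finset ?_ fun b _ => measurableSet_singleton b]
  intro x _ y _ hxy
  exact Set.disjoint_singleton.mpr hxy

variable {Γ : Type*} [Group Γ]

def rcSetoid (Δ' : Subgroup Γ) : Setoid Γ :=
  ⟨fun δ η => δ * η⁻¹ ∈ Δ',
    ⟨fun δ => by simpa using Δ'.one_mem, fun {δ η} h => by
        have := Δ'.inv_mem h; rwa [mul_inv_rev, inv_inv] at this,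
      fun {a b c} h1 h2 => by
        have := Δ'.mul_mem h1 h2
        rwa [show a * b⁻¹ * (b * c⁻¹) = a * c⁻¹ by group] at this⟩⟩

lemma rcSetoid_rel {Δ' : Subgroup Γ} {a b : Γ} : (rcSetoid Δ') a b ↔ a * b⁻¹ ∈ Δ' := Iff.rfl

lemma finite_rcQuotient (Δ' : Subgroup Γ) [Δ'.FiniteIndex] :
    Finite (Quotient (rcSetoid Δ')) := by
  have hwd : ∀ a b : Γ, (rcSetoid Δ') a b → ((a⁻¹ : Γ) : Γ ⧸ Δ') = ((b⁻¹ : Γ) : Γ ⧸ Δ') := by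
    intro a b h
    rw [QuotientGroup.eq]
    rwa [inv_inv]
  have hinj : Function.Injective
      (Quotient.lift (fun γ : Γ => ((γ⁻¹ : Γ) : Γ ⧸ Δ')) hwd) := by
    intro q1 q2
    induction q1 using Quotient.ind
    induction q2 using Quotient.ind
    intro h
    simp only [Quotient.lift_mk] at h
    rw [QuotientGroup.eq, inv_inv] at h
    exact Quotient.sound h
  exact Finite.of_injective _ hinj

lemma P_finite (k : ℕ) (hk : k ≠ 0) (Δ' : Subgroup Γ) [Δ'.FiniteIndex] :
    {x : Γ → unitInterval | (∀ δ : Γ, ∃ i : ℕ, i < k ∧ (x δ : ℝ) = i / k) ∧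
      ∀ δ η : Γ, δ * η⁻¹ ∈ Δ' → x δ = x η}.Finite := by
  haveI := finite_rcQuotient Δ'
  have hQ : {t : unitInterval | ∃ i : ℕ, i < k ∧ (t:ℝ) = i/k}.Finite := by
    apply Set.Finite.of_finite_image (f := Subtype.val) ?_ Subtype.val_injective.injOn
    apply ((Set.finite_Iio k).image (fun i : ℕ => (i:ℝ)/k)).subset
    rintro r ⟨t, ⟨i, hi, ht⟩, rfl⟩
    exact ⟨i, hi, ht.symm⟩
  apply Set.Finite.of_finite_image
    (f := fun (x : Γ → unitInterval) (q : Quotient (rcSetoid Δ')) => x q.out)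
  · apply (Set.Finite.pi (fun _ : Quotient (rcSetoid Δ') => hQ)).subset
    rintro g ⟨x, hx, rfl⟩
    intro q _
    exact hx.1 _
  · intro x hx y hy hxy
    funext γ
    have hrel : γ * ((Quotient.mk (rcSetoid Δ') γ).out)⁻¹ ∈ Δ' :=
      (rcSetoid Δ').iseqv.symm (@Quotient.mk_out Γ (rcSetoid Δ') γ)
    have h1 : x γ = x (Quotient.mk (rcSetoid Δ') γ).out := hx.2 _ _ hrel
    have h2 : y γ = y (Quotient.mk (rcSetoid Δ') γ).out := hy.2 _ _ hrel
    rw [h1, h2]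
    exact congrFun hxy _

lemma exists_modulus {ι : Type*} (f : (ι → unitInterval) → ℝ) (hf : Continuous f)
    (ε : ℝ) (hε : 0 < ε) :
    ∃ (F : Finset ι) (δ : ℝ), 0 < δ ∧ ∀ x y : ι → unitInterval,
      (∀ i ∈ F, dist (x i) (y i) < δ) → dist (f x) (f y) < ε := by
  have huc : UniformContinuous f := CompactSpace.uniformContinuous_of_continuous hf
  have hU : {p : (ι → unitInterval) × (ι → unitInterval) | dist (f p.1) (f p.2) < ε}
      ∈ 𝓤 (ι → unitInterval) := huc (Metric.dist_mem_uniformity hε)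
  rw [Pi.uniformity, Filter.mem_iInf'] at hU
  obtain ⟨I, Ifin, V, hV, hVuniv, -, hUeq⟩ := hU
  have hW : ∀ i : ι, ∃ d : ℝ, 0 < d ∧ ∀ p : (ι → unitInterval) × (ι → unitInterval),
      dist (p.1 i) (p.2 i) < d → p ∈ V i := by
    intro i
    obtain ⟨W, hW1, hW2⟩ := Filter.mem_comap.1 (hV i)
    obtain ⟨d, hd, hball⟩ := Metric.mem_uniformity_dist.1 hW1
    exact ⟨d, hd, fun p hp => hW2 (hball hp)⟩
  choose d hd hball using hW
  refine ⟨Ifin.toFinset, if h : Ifin.toFinset.Nonempty then Ifin.toFinset.inf' h d else 1,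
    ?_, ?_⟩
  · split_ifs with h
    · rw [Finset.lt_inf'_iff]; exact fun i _ => hd i
    · exact one_pos
  · intro x y hxy
    have hmem : (x, y) ∈ ⋂ i, V i := by
      rw [Set.mem_iInter]
      intro i
      by_cases hi : i ∈ I
      · apply hball i
        refine lt_of_lt_of_le (hxy i (Ifin.mem_toFinset.2 hi)) ?_
        rw [dif_pos ⟨i, Ifin.mem_toFinset.2 hi⟩]
        exact Finset.inf'_le d (Ifin.mem_toFinset.2 hi)
      · rw [hVuniv i hi]; trivial
    rw [← hUeq] at hmem
    exact hmem

lemma map_eq_uniformOn [Countable Γ]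
    (lam : Measure (Γ → unitInterval)) (hP : IsProbabilityMeasure lam)
    (hcyl : ∀ (F : Finset Γ) (A : Γ → Set unitInterval),
      (∀ γ, MeasurableSet (A γ)) →
      lam {x | ∀ γ ∈ F, x γ ∈ A γ} = ∏ γ ∈ F, volume (Subtype.val '' A γ))
    (Δ' : Subgroup Γ) [Δ'.FiniteIndex] (k : ℕ) (hk : k ≠ 0)
    (c : Γ → Γ) (hc1 : ∀ γ, c γ * γ⁻¹ ∈ Δ') (hc2 : ∀ γ η, γ * η⁻¹ ∈ Δ' → c γ = c η) :
    Measure.map (fun (x : Γ → unitInterval) (γ : Γ) => sk k (x (c γ))) lam =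
      uniformOn {x : Γ → unitInterval | (∀ δ : Γ, ∃ i : ℕ, i < k ∧ (x δ : ℝ) = i / k) ∧
        ∀ δ η : Γ, δ * η⁻¹ ∈ Δ' → x δ = x η} := by
  classical
  set P : Set (Γ → unitInterval) :=
    {x : Γ → unitInterval | (∀ δ : Γ, ∃ i : ℕ, i < k ∧ (x δ : ℝ) = i / k) ∧
      ∀ δ η : Γ, δ * η⁻¹ ∈ Δ' → x δ = x η} with hPdef'
  set S : (Γ → unitInterval) → (Γ → unitInterval) :=
    fun x γ => sk k (x (c γ)) with hSdef
  have hSmeas : Measurable S :=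
    measurable_pi_lambda _ fun γ => (sk_measurable k).comp (measurable_pi_apply (c γ))
  have hcc : ∀ γ, c (c γ) = c γ := fun γ => hc2 _ _ (hc1 γ)
  have hrange : ∀ x, S x ∈ P := by
    intro x
    refine ⟨fun δ => sk_spec k hk _, fun δ η h => ?_⟩
    simp only [hSdef, hc2 δ η h]
  have hPfin : P.Finite := P_finite k hk Δ'
  have hPmeas : MeasurableSet P := hPfin.measurableSet
  haveI := finite_rcQuotient Δ'
  have hRfin : (Set.range c).Finite := by
    apply (Set.finite_range (@Quotient.lift _ _ (rcSetoid Δ') c (fun a b h => hc2 a b h))).subset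
    rintro ρ ⟨γ, rfl⟩
    exact ⟨Quotient.mk (rcSetoid Δ') γ, rfl⟩
  set Rf : Finset Γ := hRfin.toFinset with hRf
  set m : ℝ≥0∞ := ENNReal.ofReal (1/k) ^ Rf.card with hm
  have key : ∀ x₀ ∈ P, lam (S ⁻¹' {x₀}) = m := by
    intro x₀ hx₀
    set A : Γ → Set unitInterval :=
      fun γ => if γ ∈ Rf then sk k ⁻¹' {x₀ γ} else Set.univ with hA
    have hAmeas : ∀ γ, MeasurableSet (A γ) := by
      intro γ
      simp only [hA]
      split_ifs
      · exact (sk_measurable k) (measurableSet_singleton _)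
      · exact MeasurableSet.univ
    have hset : S ⁻¹' {x₀} = {x | ∀ γ ∈ Rf, x γ ∈ A γ} := by
      ext x
      simp only [Set.mem_preimage, Set.mem_singleton_iff, Set.mem_setOf_eq]
      constructor
      · intro h γ hγ
        simp only [hA, if_pos hγ]
        obtain ⟨γ₀, rfl⟩ := hRfin.mem_toFinset.1 hγ
        have h2 := congrFun h (c γ₀)
        simp only [hSdef, hcc γ₀] at h2
        simpa using h2
      · intro h
        funext γ
        have hcmem : c γ ∈ Rf := hRfin.mem_toFinset.2 ⟨γ, rfl⟩
        have h2 := h (c γ) hcmem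
        simp only [hA, if_pos hcmem, Set.mem_preimage, Set.mem_singleton_iff] at h2
        have hx0c : x₀ (c γ) = x₀ γ := hx₀.2 _ _ (hc1 γ)
        simp only [hSdef]
        rw [h2, hx0c]
    rw [hset, hcyl Rf A hAmeas]
    have hvol : ∀ γ ∈ Rf, volume (Subtype.val '' A γ) = ENNReal.ofReal (1/k) := by
      intro γ hγ
      obtain ⟨i, hik, hval⟩ := hx₀.1 γ
      simp only [hA, if_pos hγ]
      exact sk_preimage_volume k hk (x₀ γ) i hik hval
    rw [Finset.prod_congr rfl hvol, Finset.prod_const]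
  set μ1 : Measure (Γ → unitInterval) := Measure.map S lam with hμ1
  have hμ1sing : ∀ x₀ ∈ P, μ1 {x₀} = m := by
    intro x₀ h
    rw [hμ1, Measure.map_apply hSmeas (measurableSet_singleton _)]
    exact key x₀ h
  have hμ1compl : μ1 Pᶜ = 0 := by
    rw [hμ1, Measure.map_apply hSmeas hPmeas.compl]
    have : S ⁻¹' Pᶜ = ∅ := by
      rw [Set.eq_empty_iff_forall_notMem]
      exact fun x hx => hx (hrange x)
    rw [this, measure_empty]
  haveI hμ1prob : IsProbabilityMeasure μ1 := Measure.isProbabilityMeasure_map hSmeas.aemeasurable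
  set Pf : Finset (Γ → unitInterval) := hPfin.toFinset with hPf
  have htot : (Pf.card : ℝ≥0∞) * m = 1 := by
    have h1 : μ1 P + μ1 Pᶜ = 1 := (measure_add_measure_compl hPmeas).trans measure_univ
    rw [hμ1compl, add_zero] at h1
    have h2 : μ1 P = ∑ x ∈ Pf, μ1 {x} := by
      rw [← meas_coe_finset_eq_sum μ1 Pf, hPf, hPfin.coe_toFinset]
    rw [h2, Finset.sum_congr rfl (fun x hx => hμ1sing x (hPfin.mem_toFinset.1 hx)),
      Finset.sum_const, nsmul_eq_mul] at h1
    exact h1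
  have hNm : m = (Pf.card : ℝ≥0∞)⁻¹ := ENNReal.eq_inv_of_mul_eq_one_left (by rw [mul_comm]; exact htot)
  have hcount : Measure.count P = (Pf.card : ℝ≥0∞) := by
    rw [Measure.count_apply_finite P hPfin]
  have hμ2sing : ∀ x₀ ∈ P, uniformOn P {x₀} = m := by
    intro x₀ h
    rw [uniformOn, cond_apply hPmeas, hcount,
      Set.inter_eq_self_of_subset_right (Set.singleton_subset_iff.2 h),
      Measure.count_singleton, mul_one, hNm]
  have hμ2compl : uniformOn P Pᶜ = 0 := by
    rw [uniformOn, cond_apply hPmeas, Set.inter_compl_self, measure_empty, mul_zero]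
  refine Measure.ext fun A' hA' => ?_
  have hd1 : μ1 (A' \ P) = 0 :=
    measure_mono_null (fun x hx => hx.2) hμ1compl
  have hd2 : uniformOn P (A' \ P) = 0 :=
    measure_mono_null (fun x hx => hx.2) hμ2compl
  have hsplit1 : μ1 A' = μ1 (A' ∩ P) := by
    rw [← measure_inter_add_diff A' hPmeas, hd1, add_zero]
  have hsplit2 : uniformOn P A' = uniformOn P (A' ∩ P) := by
    rw [← measure_inter_add_diff A' hPmeas, hd2, add_zero]
  rw [hsplit1, hsplit2]
  have hfin : (A' ∩ P).Finite := hPfin.subset Set.inter_subset_right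
  rw [← hfin.coe_toFinset, meas_coe_finset_eq_sum, meas_coe_finset_eq_sum]
  apply Finset.sum_congr rfl
  intro x hx
  have hxP : x ∈ P := (hfin.mem_toFinset.1 hx).2
  rw [hμ1sing x hxP, hμ2sing x hxP]

end CosetConstAux

/-- If `Γ` is residually finite, witnessed by a decreasing sequence
`(Δ_n)` of finite-index subgroups with trivial intersection, then for `k, n ≥ 1`
the set `P(k, n)` of maps `Γ → {0, 1/k, …, (k−1)/k}` constant on right cosets of
`Δ_n` is finite and shift-invariant, and the uniform measures on `P(k, n)`
converge weak-* to the product Lebesgue measure `λ^Γ` as `k, n → ∞`. -/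
theorem uniform_measures_on_coset_constant_maps_tendsto_product_lebesgue
    {Γ : Type*} [Group Γ] [Countable Γ]
    (lam : Measure (Γ → unitInterval)) (hP : IsProbabilityMeasure lam)
    (hcyl : ∀ (F : Finset Γ) (A : Γ → Set unitInterval),
      (∀ γ, MeasurableSet (A γ)) →
      lam {x | ∀ γ ∈ F, x γ ∈ A γ} = ∏ γ ∈ F, volume (Subtype.val '' A γ))
    (Δ : ℕ → Subgroup Γ) (hanti : Antitone Δ) (hfi : ∀ n, (Δ n).FiniteIndex)
    (htriv : ∀ γ : Γ, (∀ n, γ ∈ Δ n) → γ = 1)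
    (P : ℕ → ℕ → Set (Γ → unitInterval))
    (hPdef : ∀ k n, P k n =
      {x | (∀ δ : Γ, ∃ i : ℕ, i < k ∧ (x δ : ℝ) = i / k) ∧
        ∀ δ η : Γ, δ * η⁻¹ ∈ Δ n → x δ = x η}) :
    (∀ k n, 0 < k → (P k n).Finite) ∧
    (∀ k n (γ : Γ) (x : Γ → unitInterval), x ∈ P k n →
      (fun δ : Γ => x (δ * γ)) ∈ P k n) ∧
    (∀ f : BoundedContinuousFunction (Γ → unitInterval) ℝ,
      Tendsto (fun p : ℕ × ℕ => ∫ x, f x ∂(uniformOn (P p.1 p.2)))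
        (atTop ×ˢ atTop) (𝓝 (∫ x, f x ∂lam))) := by
  classical
  refine ⟨?_, ?_, ?_⟩
  · intro k n hk
    haveI := hfi n
    rw [hPdef]
    exact CosetConstAux.P_finite k hk.ne' (Δ n)
  · intro k n γ x hx
    rw [hPdef] at hx ⊢
    refine ⟨fun δ => hx.1 _, fun δ η h => ?_⟩
    apply hx.2
    rwa [show δ * γ * (η * γ)⁻¹ = δ * η⁻¹ by group]
  · intro f
    rw [Metric.tendsto_nhds]
    intro ε hε
    obtain ⟨F, δ, hδ, hmod⟩ :=
      CosetConstAux.exists_modulus f f.continuous (ε/2) (half_pos hε)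
    have hkey : ∀ p : Γ, p ≠ 1 → ∃ n, p ∉ Δ n := by
      intro p hp
      by_contra h
      push_neg at h
      exact hp (htriv p h)
    set N : ℕ := (F ×ˢ F).sup
      (fun q => if h : q.1 * q.2⁻¹ = 1 then 0 else (hkey _ h).choose) with hNdef
    have hNspec : ∀ n ≥ N, ∀ γ ∈ F, ∀ η ∈ F, γ ≠ η → γ * η⁻¹ ∉ Δ n := by
      intro n hn γ hγ η hη hne hmem
      have hp : γ * η⁻¹ ≠ 1 := by simpa [mul_inv_eq_one] using hne
      have hle : (hkey _ hp).choose ≤ N := by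
        have h2 := Finset.le_sup
          (f := fun q : Γ × Γ => if h : q.1 * q.2⁻¹ = 1 then 0 else (hkey _ h).choose)
          ((Finset.mem_product (p := (γ, η))).2 ⟨hγ, hη⟩)
        simp only [dif_neg hp] at h2
        rwa [← hNdef] at h2
      exact (hkey _ hp).choose_spec (hanti (le_trans hle hn) hmem)
    set K : ℕ := ⌈δ⁻¹⌉₊ + 1 with hKdef
    rw [prod_atTop_atTop_eq, eventually_atTop]
    refine ⟨(K, N), ?_⟩
    rintro ⟨k, n⟩ hkn
    obtain ⟨hk, hn⟩ : K ≤ k ∧ N ≤ n := Prod.mk_le_mk.1 hkn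
    have hk0 : k ≠ 0 := by omega
    have hkpos : (0:ℝ) < k := by exact_mod_cast Nat.pos_of_ne_zero hk0
    have hkdist : 1/(k:ℝ) < δ := by
      have h1 : δ⁻¹ < K := by
        calc δ⁻¹ ≤ ⌈δ⁻¹⌉₊ := Nat.le_ceil _
          _ < K := by exact_mod_cast (by omega : ⌈δ⁻¹⌉₊ < K)
      have h2 : δ⁻¹ < k := lt_of_lt_of_le h1 (by exact_mod_cast hk)
      have h3 := (mul_lt_mul_iff_right₀ hδ).2 h2
      rw [mul_inv_cancel₀ hδ.ne'] at h3
      rw [div_lt_iff₀ hkpos]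
      linarith
    haveI := hfi n
    have huniq : ∀ γ ∈ F, ∀ η ∈ F, γ * η⁻¹ ∈ Δ n → γ = η := by
      intro γ hγ η hη h
      by_contra hne
      exact hNspec n hn γ hγ η hη hne h
    set c : Γ → Γ := fun γ =>
      if h : ∃ η, η ∈ F ∧ γ * η⁻¹ ∈ Δ n then h.choose
      else (Quotient.mk (CosetConstAux.rcSetoid (Δ n)) γ).out with hcdef
    have hc1 : ∀ γ, c γ * γ⁻¹ ∈ Δ n := by
      intro γ
      simp only [hcdef]
      split_ifs with h
      · exact (CosetConstAux.rcSetoid (Δ n)).iseqv.symm h.choose_spec.2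
      · exact @Quotient.mk_out Γ (CosetConstAux.rcSetoid (Δ n)) γ
    have hc2 : ∀ γ η, γ * η⁻¹ ∈ Δ n → c γ = c η := by
      intro γ η h
      simp only [hcdef]
      by_cases h1 : ∃ ζ, ζ ∈ F ∧ γ * ζ⁻¹ ∈ Δ n
      · have h2 : ∃ ζ, ζ ∈ F ∧ η * ζ⁻¹ ∈ Δ n := by
          obtain ⟨ζ, hζF, hζ⟩ := h1
          exact ⟨ζ, hζF, (CosetConstAux.rcSetoid (Δ n)).iseqv.trans
            ((CosetConstAux.rcSetoid (Δ n)).iseqv.symm h) hζ⟩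
        rw [dif_pos h1, dif_pos h2]
        obtain ⟨hF1, hr1⟩ := h1.choose_spec
        obtain ⟨hF2, hr2⟩ := h2.choose_spec
        apply huniq _ hF1 _ hF2
        exact (CosetConstAux.rcSetoid (Δ n)).iseqv.trans
          ((CosetConstAux.rcSetoid (Δ n)).iseqv.symm hr1)
          ((CosetConstAux.rcSetoid (Δ n)).iseqv.trans h hr2)
      · have h2 : ¬ ∃ ζ, ζ ∈ F ∧ η * ζ⁻¹ ∈ Δ n := by
          rintro ⟨ζ, hζF, hζ⟩
          exact h1 ⟨ζ, hζF, (CosetConstAux.rcSetoid (Δ n)).iseqv.trans h hζ⟩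
        rw [dif_neg h1, dif_neg h2]
        congr 1
        exact Quotient.sound h
    have hcF : ∀ γ ∈ F, c γ = γ := by
      intro γ hγ
      have h1 : ∃ η, η ∈ F ∧ γ * η⁻¹ ∈ Δ n := ⟨γ, hγ, by simpa using (Δ n).one_mem⟩
      simp only [hcdef]
      rw [dif_pos h1]
      obtain ⟨hF1, hr1⟩ := h1.choose_spec
      exact huniq _ hF1 _ hγ ((CosetConstAux.rcSetoid (Δ n)).iseqv.symm hr1)
    have hmeq := CosetConstAux.map_eq_uniformOn lam hP hcyl (Δ n) k hk0 c hc1 hc2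
    have hSmeas : Measurable (fun (x : Γ → unitInterval) (γ : Γ) =>
        CosetConstAux.sk k (x (c γ))) :=
      measurable_pi_lambda _ fun γ =>
        (CosetConstAux.sk_measurable k).comp (measurable_pi_apply (c γ))
    simp only
    rw [hPdef k n, ← hmeq,
      integral_map hSmeas.aemeasurable f.continuous.aestronglyMeasurable]
    have hptwise : ∀ x : Γ → unitInterval,
        dist (f (fun γ => CosetConstAux.sk k (x (c γ)))) (f x) < ε/2 := by
      intro x
      apply hmod
      intro i hi
      rw [hcF i hi]
      exact lt_of_le_of_lt (CosetConstAux.sk_dist k hk0 (x i)) hkdist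
    have hint1 : Integrable (fun x : Γ → unitInterval =>
        f (fun γ => CosetConstAux.sk k (x (c γ)))) lam := by
      have h3 := f.integrable (Measure.map
        (fun (x : Γ → unitInterval) (γ : Γ) => CosetConstAux.sk k (x (c γ))) lam)
      rwa [integrable_map_measure f.continuous.aestronglyMeasurable
        hSmeas.aemeasurable] at h3
    have hint2 : Integrable (fun x : Γ → unitInterval => f x) lam := f.integrable lam
    rw [Real.dist_eq, ← integral_sub hint1 hint2]
    have hb := norm_integral_le_of_norm_le_const (μ := lam) (C := ε/2)
      (Eventually.of_forall (fun x => by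
        rw [Real.norm_eq_abs, ← Real.dist_eq]
        exact (hptwise x).le))
    rw [probReal_univ, mul_one, Real.norm_eq_abs] at hb
    calc |∫ x, (f (fun γ => CosetConstAux.sk k (x (c γ))) - f x) ∂lam| ≤ ε/2 := hb
      _ < ε := by linarith
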